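/- If L_pc ∘ L_cc^j ∘ L_cp = 0 for all j ∈ ℕ, then Δ ∘ L^n ∘ Δ⊥ ∘ L^{n'} ∘ Δ = 0 for all n, n' ∈ ℕ. -/
import Mathlib


/-- If `L_pc ∘ L_cc^j ∘ L_cp = 0` for all `j ∈ ℕ`, then
`Δ ∘ L^n ∘ Δ⊥ ∘ L^{n'} ∘ Δ = 0` for all `n, n' ∈ ℕ`. -/
theorem ncgd_forwards (V : Type*) [AddCommGroup V] [Module ℂ V] [FiniteDimensional ℂ V]
    (L Δ : Module.End ℂ V) (hΔ : Δ * Δ = Δ)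
    (h : ∀ j : ℕ, (Δ * L * (1 - Δ)) * ((1 - Δ) * L * (1 - Δ)) ^ j * ((1 - Δ) * L * Δ) = 0) :
    ∀ n n' : ℕ, Δ * L ^ n * (1 - Δ) * L ^ n' * Δ = 0 := by
  set Q : Module.End ℂ V := 1 - Δ with hQdef
  have hPQ : Δ * Q = 0 := by rw [hQdef, mul_sub, mul_one, hΔ, sub_self]
  have hQP : Q * Δ = 0 := by rw [hQdef, sub_mul, one_mul, hΔ, sub_self]
  have hQQ : Q * Q = Q := by rw [hQdef, sub_mul, one_mul, ← hQdef, hPQ, sub_zero]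
  set B : Module.End ℂ V := Δ * L * Q with hB
  set C : Module.End ℂ V := Q * L * Δ with hC
  set D : Module.End ℂ V := Q * L * Q with hD
  set S1 : Set (Module.End ℂ V) := {m | ∃ x j, m = x * B * D ^ j} with hS1
  set S2 : Set (Module.End ℂ V) := {m | ∃ j y, m = D ^ j * C * y} with hS2
  -- closure of span S1 under right multiplication by D
  have hS1D : ∀ s ∈ Submodule.span ℂ S1, s * D ∈ Submodule.span ℂ S1 := by
    intro s hs
    induction hs using Submodule.span_induction with
    | mem m hm =>
      obtain ⟨x, j, rfl⟩ := hm
      exact Submodule.subset_span ⟨x, j + 1, by rw [pow_succ, mul_assoc]⟩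
    | zero => simpa using Submodule.zero_mem _
    | add a b _ _ ha hb => simpa [add_mul] using Submodule.add_mem _ ha hb
    | smul c a _ ha => simpa [smul_mul_assoc] using Submodule.smul_mem _ c ha
  have hS2D : ∀ s ∈ Submodule.span ℂ S2, D * s ∈ Submodule.span ℂ S2 := by
    intro s hs
    induction hs using Submodule.span_induction with
    | mem m hm =>
      obtain ⟨j, y, rfl⟩ := hm
      exact Submodule.subset_span ⟨j + 1, y, by rw [pow_succ']; noncomm_ring⟩
    | zero => simpa using Submodule.zero_mem _
    | add a b _ _ ha hb => simpa [mul_add] using Submodule.add_mem _ ha hb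
    | smul c a _ ha => simpa [mul_smul_comm] using Submodule.smul_mem _ c ha
  have lem1 : ∀ n : ℕ, Δ * L ^ n * Q ∈ Submodule.span ℂ S1 := by
    intro n
    induction n with
    | zero => simp [hPQ]
    | succ n ih =>
      have key : Δ * L ^ (n + 1) * Q
          = (Δ * L ^ n * Δ) * B + (Δ * L ^ n * Q) * D := by
        have e1 : (Δ * L ^ n * Δ) * B = Δ * L ^ n * (Δ * Δ) * L * Q := by
          rw [hB]; noncomm_ring
        have e2 : (Δ * L ^ n * Q) * D = Δ * L ^ n * (Q * Q) * L * Q := by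
          rw [hD]; noncomm_ring
        rw [e1, e2, hΔ, hQQ]
        have hsum : Δ + Q = 1 := by rw [hQdef]; noncomm_ring
        calc Δ * L ^ (n + 1) * Q = Δ * L ^ n * (Δ + Q) * L * Q := by
              rw [hsum, pow_succ]; noncomm_ring
          _ = Δ * L ^ n * Δ * L * Q + Δ * L ^ n * Q * L * Q := by noncomm_ring
      rw [key]
      refine Submodule.add_mem _ ?_ (hS1D _ ih)
      exact Submodule.subset_span ⟨Δ * L ^ n * Δ, 0, by rw [pow_zero, mul_one]⟩
  have lem2 : ∀ n : ℕ, Q * L ^ n * Δ ∈ Submodule.span ℂ S2 := by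
    intro n
    induction n with
    | zero => simp [hQP]
    | succ n ih =>
      have key : Q * L ^ (n + 1) * Δ
          = C * (Δ * L ^ n * Δ) + D * (Q * L ^ n * Δ) := by
        have e1 : C * (Δ * L ^ n * Δ) = Q * L * (Δ * Δ) * L ^ n * Δ := by
          rw [hC]; noncomm_ring
        have e2 : D * (Q * L ^ n * Δ) = Q * L * (Q * Q) * L ^ n * Δ := by
          rw [hD]; noncomm_ring
        rw [e1, e2, hΔ, hQQ]
        have hsum : Δ + Q = 1 := by rw [hQdef]; noncomm_ring
        calc Q * L ^ (n + 1) * Δ = Q * L * (Δ + Q) * L ^ n * Δ := by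
              rw [hsum, pow_succ']; noncomm_ring
          _ = Q * L * Δ * L ^ n * Δ + Q * L * Q * L ^ n * Δ := by noncomm_ring
      rw [key]
      refine Submodule.add_mem _ ?_ (hS2D _ ih)
      exact Submodule.subset_span ⟨0, Δ * L ^ n * Δ, by rw [pow_zero, one_mul]⟩
  have hprod : ∀ s ∈ Submodule.span ℂ S1, ∀ t ∈ Submodule.span ℂ S2, s * t = 0 := by
    intro s hs
    induction hs using Submodule.span_induction with
    | mem m hm =>
      obtain ⟨x, a, rfl⟩ := hm
      intro t ht
      induction ht using Submodule.span_induction with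
      | mem m' hm' =>
        obtain ⟨b, y, rfl⟩ := hm'
        have := h (a + b)
        calc x * B * D ^ a * (D ^ b * C * y)
            = x * (B * D ^ (a + b) * C) * y := by rw [pow_add]; noncomm_ring
          _ = 0 := by rw [hB, hD, hC] at this ⊢; rw [this]; simp
      | zero => simp
      | add a' b' _ _ ha hb => rw [mul_add, ha, hb, add_zero]
      | smul c a' _ ha => rw [mul_smul_comm, ha, smul_zero]
    | zero => intro t ht; simp
    | add a b _ _ ha hb => intro t ht; rw [add_mul, ha t ht, hb t ht, add_zero]
    | smul c a _ ha => intro t ht; rw [smul_mul_assoc, ha t ht, smul_zero]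
  intro n n'
  have : Δ * L ^ n * (1 - Δ) * L ^ n' * Δ = (Δ * L ^ n * Q) * (Q * L ^ n' * Δ) := by
    rw [← hQdef]
    calc Δ * L ^ n * Q * L ^ n' * Δ = Δ * L ^ n * (Q * Q) * L ^ n' * Δ := by rw [hQQ]
      _ = (Δ * L ^ n * Q) * (Q * L ^ n' * Δ) := by noncomm_ring
  rw [this]
  exact hprod _ (lem1 n) _ (lem2 n')
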